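/- In the Trimmed Graphical Lasso deterministic setting, under hypotheses (H1)–(H4) and assuming the off-diagonal support S of Θ* satisfies |S| ≤ k, the error matrix satisfies the Frobenius bound ‖Δ̃‖_F ≤ (1/κ)·((3λ/2)·√(k+p) + τ1). (Theorem 1, Frobenius-norm error bound.) -/

import Mathlib

open Matrix

/-- Trace inner product ⟨U,V⟩ = tr(U Vᵀ). -/
noncomputable def traceInner {p : ℕ} (U V : Matrix (Fin p) (Fin p) ℝ) : ℝ :=
  (U * Vᵀ).trace

/-- Frobenius norm. -/
noncomputable def frobNorm {p : ℕ} (U : Matrix (Fin p) (Fin p) ℝ) : ℝ :=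
  Real.sqrt (∑ i, ∑ j, (U i j) ^ 2)

/-- Entrywise ℓ1 norm: ‖U‖₁ = Σ_{i,j} |U_{ij}|. -/
noncomputable def l1Norm {p : ℕ} (U : Matrix (Fin p) (Fin p) ℝ) : ℝ :=
  ∑ i, ∑ j, |U i j|

/-- Off-diagonal entrywise ℓ1 norm: ‖U‖_{1,off} = Σ_{i≠j} |U_{ij}|. -/
noncomputable def offNorm {p : ℕ} (U : Matrix (Fin p) (Fin p) ℝ) : ℝ :=
  ∑ ij ∈ Finset.univ.filter (fun ij : Fin p × Fin p => ij.1 ≠ ij.2), |U ij.1 ij.2|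

/-- Entrywise sup norm: ‖U‖_∞ = max_{i,j} |U_{ij}|. -/
noncomputable def linfNorm {p : ℕ} (U : Matrix (Fin p) (Fin p) ℝ) : ℝ :=
  ⨆ ij : Fin p × Fin p, |U ij.1 ij.2|

section Aux
variable {p : ℕ}

lemma traceInner_eq_sum (U V : Matrix (Fin p) (Fin p) ℝ) :
    traceInner U V = ∑ ij : Fin p × Fin p, U ij.1 ij.2 * V ij.1 ij.2 := by
  rw [Fintype.sum_prod_type]
  simp [traceInner, Matrix.trace, Matrix.diag, Matrix.mul_apply, Matrix.transpose_apply]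

lemma l1Norm_eq (U : Matrix (Fin p) (Fin p) ℝ) :
    l1Norm U = ∑ ij : Fin p × Fin p, |U ij.1 ij.2| := by
  rw [Fintype.sum_prod_type]; rfl

lemma frobNorm_eq (U : Matrix (Fin p) (Fin p) ℝ) :
    frobNorm U = Real.sqrt (∑ ij : Fin p × Fin p, (U ij.1 ij.2) ^ 2) := by
  rw [Fintype.sum_prod_type]; rfl

lemma l1Norm_nonneg (U : Matrix (Fin p) (Fin p) ℝ) : 0 ≤ l1Norm U :=
  Finset.sum_nonneg fun _ _ => Finset.sum_nonneg fun _ _ => abs_nonneg _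

lemma l1Norm_sub_le (U V : Matrix (Fin p) (Fin p) ℝ) :
    l1Norm (U - V) ≤ l1Norm U + l1Norm V := by
  simp only [l1Norm_eq, ← Finset.sum_add_distrib]
  exact Finset.sum_le_sum fun ij _ => abs_sub (U ij.1 ij.2) (V ij.1 ij.2)

lemma abs_le_linf (U : Matrix (Fin p) (Fin p) ℝ) (i j : Fin p) :
    |U i j| ≤ linfNorm U := by
  show |U i j| ≤ ⨆ ij : Fin p × Fin p, |U ij.1 ij.2|
  exact le_ciSup (f := fun ij : Fin p × Fin p => |U ij.1 ij.2|)
    (Set.Finite.bddAbove (Set.finite_range _)) (⟨i, j⟩ : Fin p × Fin p)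

lemma abs_traceInner_le (U V : Matrix (Fin p) (Fin p) ℝ) :
    |traceInner U V| ≤ linfNorm U * l1Norm V := by
  rw [traceInner_eq_sum, l1Norm_eq, Finset.mul_sum]
  refine (Finset.abs_sum_le_sum_abs _ _).trans (Finset.sum_le_sum fun ij _ => ?_)
  rw [abs_mul]
  exact mul_le_mul_of_nonneg_right (abs_le_linf U ij.1 ij.2) (abs_nonneg _)

lemma traceInner_sub_left (U V W : Matrix (Fin p) (Fin p) ℝ) :
    traceInner (U - V) W = traceInner U W - traceInner V W := by
  simp [traceInner, Matrix.sub_mul]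

lemma traceInner_add_left (U V W : Matrix (Fin p) (Fin p) ℝ) :
    traceInner (U + V) W = traceInner U W + traceInner V W := by
  simp [traceInner, Matrix.add_mul]

lemma traceInner_smul_right (U V : Matrix (Fin p) (Fin p) ℝ) (c : ℝ) :
    traceInner U (c • V) = c * traceInner U V := by
  simp [traceInner, Matrix.transpose_smul, Matrix.mul_smul]

lemma frobNorm_smul (U : Matrix (Fin p) (Fin p) ℝ) (c : ℝ) :
    frobNorm (c • U) = |c| * frobNorm U := by
  simp only [frobNorm, Matrix.smul_apply, smul_eq_mul, mul_pow, ← Finset.mul_sum]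
  rw [Real.sqrt_mul (sq_nonneg c), Real.sqrt_sq_eq_abs]

lemma psd_diag_nonneg {M : Matrix (Fin p) (Fin p) ℝ} (hM : M.PosSemidef) (i : Fin p) :
    0 ≤ M i i := by
  exact hM.diag_nonneg

lemma psd_trace_nonneg {M : Matrix (Fin p) (Fin p) ℝ} (hM : M.PosSemidef) :
    0 ≤ M.trace := Finset.sum_nonneg fun i _ => psd_diag_nonneg hM i

lemma transpose_eq_of_posDef {A : Matrix (Fin p) (Fin p) ℝ} (hA : A.PosDef) : Aᵀ = A := by
  rw [← Matrix.conjTranspose_eq_transpose_of_trivial]; exact hA.1.eq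

lemma posdef_smul {A : Matrix (Fin p) (Fin p) ℝ} (hA : A.PosDef) {c : ℝ} (hc : 0 < c) :
    (c • A).PosDef := by
  refine ⟨?_, fun x hx => ?_⟩
  · unfold Matrix.IsHermitian
    rw [Matrix.conjTranspose_smul]
    simp [Matrix.conjTranspose_eq_transpose_of_trivial, transpose_eq_of_posDef hA]
  · exact (hA.smul hc).2 hx

open scoped MatrixOrder in
lemma mono_inner {A B : Matrix (Fin p) (Fin p) ℝ} (hA : A.PosDef) (hB : B.PosDef) :
    0 ≤ traceInner (A⁻¹ - B⁻¹) (B - A) := by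
  show 0 ≤ ((A⁻¹ - B⁻¹) * (B - A)ᵀ).trace
  rw [Matrix.inv_sub_inv (by simp [hA.isUnit, hB.isUnit])]
  set C := B - A with hC
  have hAi : (A⁻¹).PosSemidef := hA.inv.posSemidef
  have hBi : (B⁻¹).PosSemidef := hB.inv.posSemidef
  obtain ⟨N, hNN, hNt⟩ : ∃ N : Matrix (Fin p) (Fin p) ℝ, N * N = B⁻¹ ∧ Nᵀ = N := by
    refine ⟨CFC.sqrt (B⁻¹), CFC.sqrt_mul_sqrt_self _ hBi.nonneg, ?_⟩
    rw [← Matrix.conjTranspose_eq_transpose_of_trivial]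
    exact (CFC.sqrt_nonneg (B⁻¹)).posSemidef.isHermitian.eq
  have e1 : A⁻¹ * C * B⁻¹ * Cᵀ = (A⁻¹ * (C * N)) * (N * Cᵀ) := by
    rw [← hNN]; noncomm_ring
  rw [e1, Matrix.trace_mul_comm]
  have e2 : N * Cᵀ * (A⁻¹ * (C * N)) = (C * N)ᴴ * A⁻¹ * (C * N) := by
    rw [Matrix.conjTranspose_mul, Matrix.conjTranspose_eq_transpose_of_trivial,
      Matrix.conjTranspose_eq_transpose_of_trivial, hNt]
    noncomm_ring
  rw [e2]
  exact psd_trace_nonneg (hAi.conjTranspose_mul_mul_same _)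

end Aux

set_option maxHeartbeats 1000000 in
/-- Theorem 1, Frobenius-norm error bound. -/
theorem error_frobNorm_bound
    (p n h : ℕ) (hp : 0 < p) (hn : 0 < n) (hh : 0 < h)
    (x : Fin n → Fin p → ℝ)
    (Θstar Θtil : Matrix (Fin p) (Fin p) ℝ)
    (hΘstar : Θstar.PosDef) (hΘtil : Θtil.PosDef)
    (R : ℝ) (hR : 0 < R) (hΘstarR : l1Norm Θstar ≤ R) (hΘtilR : l1Norm Θtil ≤ R)
    (wtil wstar : Fin n → ℝ)
    (hwtil : ∀ i, wtil i ∈ Set.Icc (0 : ℝ) 1) (hwstar : ∀ i, wstar i ∈ Set.Icc (0 : ℝ) 1)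
    (κ τ₁ τ₂ lam : ℝ) (hκ : 0 < κ) (hτ₁ : 0 ≤ τ₁) (hτ₂ : 0 ≤ τ₂) (hlam : 0 < lam)
    (H1 : traceInner
        ((1 / (h : ℝ)) • ∑ i, wtil i • Matrix.vecMulVec (x i) (x i) - Θtil⁻¹)
        (Θtil - Θstar) ≤ lam * (offNorm Θstar - offNorm Θtil))
    (H2 : ∀ Δ : Matrix (Fin p) (Fin p) ℝ, Δ.IsSymm → (Θstar + Δ).PosDef →
        frobNorm Δ ≤ 1 →
        traceInner (Θstar⁻¹ - (Θstar + Δ)⁻¹) Δ ≥ κ * (frobNorm Δ) ^ 2)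
    (H3 : |traceInner
        ((1 / (h : ℝ)) • ∑ i, (wtil i - wstar i) • Matrix.vecMulVec (x i) (x i))
        (Θtil - Θstar)|
        ≤ τ₁ * frobNorm (Θtil - Θstar) + τ₂ * l1Norm (Θtil - Θstar))
    (H4a : 4 * max
        (linfNorm ((1 / (h : ℝ)) • ∑ i, wstar i • Matrix.vecMulVec (x i) (x i) - Θstar⁻¹))
        τ₂ ≤ lam)
    (H4b : lam ≤ (κ - τ₁) / (3 * R))
    (k : ℕ)
    (hk : (Finset.univ.filter
        (fun ij : Fin p × Fin p => ij.1 ≠ ij.2 ∧ Θstar ij.1 ij.2 ≠ 0)).card ≤ k) :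
    frobNorm (Θtil - Θstar) ≤ (1 / κ) * ((3 * lam / 2) * Real.sqrt ((k : ℝ) + p) + τ₁) := by
  set Γt := (1 / (h : ℝ)) • ∑ i, wtil i • Matrix.vecMulVec (x i) (x i) with hΓt
  set Γs := (1 / (h : ℝ)) • ∑ i, wstar i • Matrix.vecMulVec (x i) (x i) with hΓs
  set Δ := Θtil - Θstar with hΔ
  set d := frobNorm Δ with hd
  have hd0 : 0 ≤ d := Real.sqrt_nonneg _
  have hl1 : 0 ≤ l1Norm Δ := l1Norm_nonneg Δ
  -- H4 consequences
  have hlinf : linfNorm (Γs - Θstar⁻¹) ≤ lam / 4 := by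
    have := le_max_left (linfNorm (Γs - Θstar⁻¹)) τ₂
    linarith
  have hτ₂' : τ₂ ≤ lam / 4 := by
    have := le_max_right (linfNorm (Γs - Θstar⁻¹)) τ₂
    linarith
  have hκτ : 3 * R * lam ≤ κ - τ₁ := by
    have h' := (le_div_iff₀ (by positivity : (0:ℝ) < 3 * R)).mp H4b
    linarith
  have hκτpos : 0 < κ - τ₁ := lt_of_lt_of_le (by positivity) hκτ
  -- upper bound
  have hΓdiff : (1 / (h : ℝ)) • ∑ i, (wtil i - wstar i) • Matrix.vecMulVec (x i) (x i)
      = Γt - Γs := by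
    rw [hΓt, hΓs, ← smul_sub, ← Finset.sum_sub_distrib]
    congr 1
    refine Finset.sum_congr rfl fun i _ => ?_
    rw [sub_smul]
  have upper : traceInner (Θstar⁻¹ - Θtil⁻¹) Δ
      ≤ lam * (offNorm Θstar - offNorm Θtil) + (lam / 2) * l1Norm Δ + τ₁ * d := by
    have e : Θstar⁻¹ - Θtil⁻¹ = (Γt - Θtil⁻¹) - (Γs - Θstar⁻¹) - (Γt - Γs) := by abel
    rw [e, traceInner_sub_left, traceInner_sub_left]
    have b2 : |traceInner (Γs - Θstar⁻¹) Δ| ≤ (lam / 4) * l1Norm Δ :=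
      (abs_traceInner_le _ _).trans (mul_le_mul_of_nonneg_right hlinf hl1)
    have b3 : |traceInner (Γt - Γs) Δ| ≤ τ₁ * d + (lam / 4) * l1Norm Δ := by
      rw [← hΓdiff]
      exact H3.trans (by nlinarith [mul_le_mul_of_nonneg_right hτ₂' hl1])
    have b2' := abs_le.mp b2
    have b3' := abs_le.mp b3
    linarith [H1]
  -- combinatorial bound
  set a : Fin p × Fin p → ℝ := fun ij => |Δ ij.1 ij.2| with ha
  have ha0 : ∀ ij, 0 ≤ a ij := fun ij => abs_nonneg _
  set T := Finset.univ.filter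
      (fun ij : Fin p × Fin p => ij.1 ≠ ij.2 ∧ Θstar ij.1 ij.2 ≠ 0) with hT
  set O := Finset.univ.filter (fun ij : Fin p × Fin p => ij.1 ≠ ij.2) with hO
  set D := Finset.univ.filter (fun ij : Fin p × Fin p => ij.1 = ij.2) with hD
  have hTO : T ⊆ O := by
    intro ij hij
    simp only [hT, hO, Finset.mem_filter] at *
    exact ⟨hij.1, hij.2.1⟩
  set C := O \ T with hC
  have hsplitO : ∀ f : Fin p × Fin p → ℝ, ∑ ij ∈ C, f ij + ∑ ij ∈ T, f ij = ∑ ij ∈ O, f ij :=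
    fun f => Finset.sum_sdiff hTO
  have hsplitU : ∀ f : Fin p × Fin p → ℝ,
      ∑ ij ∈ D, f ij + ∑ ij ∈ O, f ij = ∑ ij : Fin p × Fin p, f ij := by
    intro f
    rw [hD, hO]
    exact Finset.sum_filter_add_sum_filter_not _ _ f
  have hoffΔ : offNorm Θstar - offNorm Θtil ≤ ∑ ij ∈ T, a ij - ∑ ij ∈ C, a ij := by
    have e1 : offNorm Θstar - offNorm Θtil
        = ∑ ij ∈ O, (|Θstar ij.1 ij.2| - |Θtil ij.1 ij.2|) := by
      rw [offNorm, offNorm, ← Finset.sum_sub_distrib, ← hO]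
    rw [e1, ← hsplitO]
    have hTle : ∑ ij ∈ T, (|Θstar ij.1 ij.2| - |Θtil ij.1 ij.2|) ≤ ∑ ij ∈ T, a ij := by
      refine Finset.sum_le_sum fun ij _ => ?_
      have := abs_sub_abs_le_abs_sub (Θstar ij.1 ij.2) (Θtil ij.1 ij.2)
      have e2 : |Θstar ij.1 ij.2 - Θtil ij.1 ij.2| = a ij := by
        rw [ha, hΔ]
        simp [abs_sub_comm]
      linarith
    have hCle : ∑ ij ∈ C, (|Θstar ij.1 ij.2| - |Θtil ij.1 ij.2|) = -∑ ij ∈ C, a ij := by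
      rw [← Finset.sum_neg_distrib]
      refine Finset.sum_congr rfl fun ij hij => ?_
      have hzero : Θstar ij.1 ij.2 = 0 := by
        simp only [hC, hO, hT, Finset.mem_sdiff, Finset.mem_filter, Finset.mem_univ,
          true_and, not_and, not_not] at hij
        exact hij.2 hij.1
      rw [ha, hΔ]
      simp [hzero]
    linarith
  have hl1split : l1Norm Δ = ∑ ij ∈ D, a ij + (∑ ij ∈ C, a ij + ∑ ij ∈ T, a ij) := by
    rw [l1Norm_eq, ← hsplitU a, hsplitO a]
  -- Cauchy–Schwarz part
  have hTD : Disjoint T D := by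
    rw [Finset.disjoint_left]
    intro ij hijT hijD
    simp only [hT, hD, Finset.mem_filter] at hijT hijD
    exact hijT.2.1 hijD.2
  have hcardD : D.card = p := by
    have : D = Finset.univ.image (fun i : Fin p => ((i, i) : Fin p × Fin p)) := by
      ext ij
      simp only [hD, Finset.mem_filter, Finset.mem_univ, true_and, Finset.mem_image]
      constructor
      · rintro rfl'
        exact ⟨ij.1, by simp [Prod.ext_iff, rfl']⟩
      · rintro ⟨i, rfl⟩
        rfl
    rw [this, Finset.card_image_of_injective _ (fun i j hij => (Prod.ext_iff.mp hij).1),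
      Finset.card_univ, Fintype.card_fin]
  have hsumTD : ∑ ij ∈ T ∪ D, a ij ≤ Real.sqrt ((k : ℝ) + p) * d := by
    have hsq : (∑ ij ∈ T ∪ D, a ij) ^ 2 ≤ ((k : ℝ) + p) * d ^ 2 := by
      have h1 : (∑ ij ∈ T ∪ D, a ij) ^ 2 ≤ ((T ∪ D).card : ℝ) * ∑ ij ∈ T ∪ D, a ij ^ 2 :=
        sq_sum_le_card_mul_sum_sq
      have h2 : ∑ ij ∈ T ∪ D, a ij ^ 2 ≤ ∑ ij : Fin p × Fin p, a ij ^ 2 :=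
        Finset.sum_le_sum_of_subset_of_nonneg (Finset.subset_univ _)
          (fun ij _ _ => sq_nonneg _)
      have h3 : ((T ∪ D).card : ℝ) ≤ (k : ℝ) + p := by
        have := Finset.card_union_le T D
        have hkk : T.card ≤ k := hk
        push_cast
        calc ((T ∪ D).card : ℝ) ≤ (T.card : ℝ) + D.card := by exact_mod_cast this
          _ ≤ (k : ℝ) + p := by
            rw [hcardD]
            exact add_le_add (by exact_mod_cast hkk) le_rfl
      have h4 : d ^ 2 = ∑ ij : Fin p × Fin p, a ij ^ 2 := by
        rw [hd, frobNorm_eq, Real.sq_sqrt (Finset.sum_nonneg fun ij _ => sq_nonneg _)]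
        refine Finset.sum_congr rfl fun ij _ => ?_
        rw [ha, sq_abs]
      calc (∑ ij ∈ T ∪ D, a ij) ^ 2 ≤ ((T ∪ D).card : ℝ) * ∑ ij ∈ T ∪ D, a ij ^ 2 := h1
        _ ≤ ((k : ℝ) + p) * ∑ ij : Fin p × Fin p, a ij ^ 2 := by
            apply mul_le_mul h3 h2 (Finset.sum_nonneg fun ij _ => sq_nonneg _) (by positivity)
        _ = ((k : ℝ) + p) * d ^ 2 := by rw [h4]
    have hTDnn : 0 ≤ ∑ ij ∈ T ∪ D, a ij := Finset.sum_nonneg fun ij _ => ha0 ij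
    calc ∑ ij ∈ T ∪ D, a ij = Real.sqrt ((∑ ij ∈ T ∪ D, a ij) ^ 2) :=
          (Real.sqrt_sq hTDnn).symm
      _ ≤ Real.sqrt (((k : ℝ) + p) * d ^ 2) := Real.sqrt_le_sqrt hsq
      _ = Real.sqrt ((k : ℝ) + p) * d := by
          rw [Real.sqrt_mul (by positivity), Real.sqrt_sq hd0]
  have hsumsplit : ∑ ij ∈ T ∪ D, a ij = ∑ ij ∈ T, a ij + ∑ ij ∈ D, a ij :=
    Finset.sum_union hTD
  have hsC : 0 ≤ ∑ ij ∈ C, a ij := Finset.sum_nonneg fun ij _ => ha0 ij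
  have hsD : 0 ≤ ∑ ij ∈ D, a ij := Finset.sum_nonneg fun ij _ => ha0 ij
  have hsT : 0 ≤ ∑ ij ∈ T, a ij := Finset.sum_nonneg fun ij _ => ha0 ij
  have comb : lam * (offNorm Θstar - offNorm Θtil) + (lam / 2) * l1Norm Δ
      ≤ (3 * lam / 2) * Real.sqrt ((k : ℝ) + p) * d := by
    have h1 : lam * (offNorm Θstar - offNorm Θtil)
        ≤ lam * (∑ ij ∈ T, a ij - ∑ ij ∈ C, a ij) :=
      mul_le_mul_of_nonneg_left hoffΔ hlam.le
    have h2 : (3 * lam / 2) * (∑ ij ∈ T ∪ D, a ij)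
        ≤ (3 * lam / 2) * (Real.sqrt ((k : ℝ) + p) * d) :=
      mul_le_mul_of_nonneg_left hsumTD (by positivity)
    rw [hsumsplit] at h2
    rw [hl1split]
    nlinarith
  -- RSC lower bounds
  have hΔsymm : Δ.IsSymm := by
    rw [Matrix.IsSymm, hΔ, Matrix.transpose_sub, transpose_eq_of_posDef hΘstar,
      transpose_eq_of_posDef hΘtil]
  have hΘΔ : Θstar + Δ = Θtil := by rw [hΔ]; abel
  -- first: d ≤ 1
  have hd1 : d ≤ 1 := by
    by_contra hcon
    push_neg at hcon
    have hdpos : 0 < d := lt_trans one_pos hcon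
    set t : ℝ := 1 / d with hts
    have ht0 : 0 < t := by positivity
    have ht1 : t < 1 := by rw [hts]; rw [div_lt_one hdpos]; exact hcon
    set A := Θstar + t • Δ with hA
    have hApd : A.PosDef := by
      have e : A = (1 - t) • Θstar + t • Θtil := by
        rw [hA, hΔ]; module
      rw [e]
      exact (posdef_smul hΘstar (by linarith)).add (posdef_smul hΘtil ht0)
    have hfro : frobNorm (t • Δ) ≤ 1 := by
      rw [frobNorm_smul, ← hd, hts, abs_of_pos ht0]
      rw [div_mul_cancel₀ 1 hdpos.ne']
    have hsymm' : (t • Δ).IsSymm := by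
      rw [Matrix.IsSymm, Matrix.transpose_smul, hΔsymm.eq]
    have hRSC := H2 (t • Δ) hsymm' (by rw [← hA]; exact hApd) hfro
    rw [← hA] at hRSC
    rw [traceInner_smul_right, frobNorm_smul, ← hd, abs_of_pos ht0] at hRSC
    have htd : t * d = 1 := by rw [hts]; field_simp
    rw [htd] at hRSC
    -- hRSC : t * traceInner (Θstar⁻¹ - A⁻¹) Δ ≥ κ * 1 ^ 2
    have hlow1 : traceInner (Θstar⁻¹ - A⁻¹) Δ ≥ κ * d := by
      have : traceInner (Θstar⁻¹ - A⁻¹) Δ ≥ κ / t := by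
        rw [ge_iff_le, div_le_iff₀ ht0]
        nlinarith
      have : κ / t = κ * d := by rw [hts]; field_simp
      linarith [‹traceInner (Θstar⁻¹ - A⁻¹) Δ ≥ κ / t›, this.ge, this.le]
    have hmono : 0 ≤ traceInner (A⁻¹ - Θtil⁻¹) Δ := by
      have h0 := mono_inner hApd hΘtil
      have e : Θtil - A = (1 - t) • Δ := by rw [hA, hΔ]; module
      rw [e, traceInner_smul_right] at h0
      nlinarith
    have hsum : traceInner (Θstar⁻¹ - Θtil⁻¹) Δ
        = traceInner (Θstar⁻¹ - A⁻¹) Δ + traceInner (A⁻¹ - Θtil⁻¹) Δ := by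
      rw [← traceInner_add_left]
      congr 1
      abel
    -- crude upper bound
    have hoffcrude : offNorm Θstar - offNorm Θtil ≤ l1Norm Δ := by
      have : ∑ ij ∈ T, a ij - ∑ ij ∈ C, a ij ≤ l1Norm Δ := by
        rw [hl1split]; linarith
      linarith [hoffΔ]
    have hl1R : l1Norm Δ ≤ 2 * R := by
      have := l1Norm_sub_le Θtil Θstar
      rw [← hΔ] at this
      linarith
    have hup : traceInner (Θstar⁻¹ - Θtil⁻¹) Δ ≤ (κ - τ₁) + τ₁ * d := by
      have h1 : lam * (offNorm Θstar - offNorm Θtil) ≤ lam * l1Norm Δ :=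
        mul_le_mul_of_nonneg_left hoffcrude hlam.le
      have h2 : (3 * lam / 2) * l1Norm Δ ≤ (3 * lam / 2) * (2 * R) :=
        mul_le_mul_of_nonneg_left hl1R (by positivity)
      nlinarith [upper]
    nlinarith [hsum, hlow1, hmono, hup]
  -- main inequality
  have hRSC := H2 Δ hΔsymm (by rw [hΘΔ]; exact hΘtil) hd1
  rw [hΘΔ, ← hd] at hRSC
  have final : κ * d ^ 2 ≤ (3 * lam / 2) * Real.sqrt ((k : ℝ) + p) * d + τ₁ * d := by
    nlinarith [upper, comb]
  rcases eq_or_lt_of_le hd0 with hz | hdpos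
  · rw [← hz]
    positivity
  · have hκd : κ * d ≤ (3 * lam / 2) * Real.sqrt ((k : ℝ) + p) + τ₁ := by
      nlinarith
    rw [one_div, inv_mul_eq_div, le_div_iff₀ hκ]
    nlinarith
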